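/- Let k ≥ 1, s ≥ 1 and 0 ≤ ℓ ≤ s·k − 1 be integers, and let G = (V,E) be a (k,ℓ)-sparse hypergraph in which every edge has at least s vertices. If C₁ and C₂ are distinct components of G, then the multisets E(C₁) and E(C₂) are disjoint (no edge of E lies in both spans) and |C₁ ∩ C₂| < s. -/
import Mathlib


/-- The number of edges of the multiset `E` spanned by the vertex set `W`. -/
def spanCount {V : Type*} [DecidableEq V] (E : Multiset (Finset V)) (W : Finset V) : ℕ :=
  (E.filter fun e => e ⊆ W).card

/-- A hypergraph with edge multiset `E` is `(k,ℓ)`-sparse if every vertex subset spanning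
at least one edge spans at most `k|W| - ℓ` edges. -/
def Sparse {V : Type*} [DecidableEq V] (k l : ℕ) (E : Multiset (Finset V)) : Prop :=
  ∀ W : Finset V, 1 ≤ spanCount E W → spanCount E W + l ≤ k * W.card

/-- A block of a sparse hypergraph: a vertex subset spanning at least one edge and
spanning exactly `k|W| - ℓ` edges. -/
def IsBlock {V : Type*} [DecidableEq V] (k l : ℕ) (E : Multiset (Finset V)) (W : Finset V) :
    Prop :=
  1 ≤ spanCount E W ∧ spanCount E W + l = k * W.card

/-- A component: an inclusion-maximal block. -/
def IsComponent {V : Type*} [DecidableEq V] (k l : ℕ) (E : Multiset (Finset V))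
    (W : Finset V) : Prop :=
  IsBlock k l E W ∧ ∀ W' : Finset V, IsBlock k l E W' → W ⊆ W' → W' = W

/-- Submodularity-type inequality for span counts. -/
lemma spanCount_subadd {V : Type*} [DecidableEq V] (E : Multiset (Finset V)) (A B : Finset V) :
    spanCount E A + spanCount E B ≤ spanCount E (A ∪ B) + spanCount E (A ∩ B) := by
  unfold spanCount
  rw [← Multiset.card_add, ← Multiset.card_add, Multiset.filter_add_filter]
  refine Multiset.card_le_card (add_le_add ?_ ?_) <;>
    apply Multiset.monotone_filter_right
  · intro e he
    rcases he with h | h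
    · exact h.trans Finset.subset_union_left
    · exact h.trans Finset.subset_union_right
  · intro e he
    exact Finset.subset_inter he.1 he.2

theorem stmt_6 {V : Type*} [DecidableEq V] (k s l : ℕ) (hk : 1 ≤ k) (hs : 1 ≤ s)
    (hl : l + 1 ≤ s * k) (E : Multiset (Finset V)) (hcard : ∀ e ∈ E, s ≤ e.card)
    (hsp : Sparse k l E) (C₁ C₂ : Finset V)
    (hC₁ : IsComponent k l E C₁) (hC₂ : IsComponent k l E C₂) (hne : C₁ ≠ C₂) :
    (∀ e ∈ E, e ⊆ C₁ → ¬ e ⊆ C₂) ∧ (C₁ ∩ C₂).card < s := by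
  obtain ⟨⟨h1pos, h1eq⟩, h1max⟩ := hC₁
  obtain ⟨⟨h2pos, h2eq⟩, h2max⟩ := hC₂
  have hsub := spanCount_subadd E C₁ C₂
  have hcards : C₁.card + C₂.card = (C₁ ∪ C₂).card + (C₁ ∩ C₂).card :=
    (Finset.card_union_add_card_inter C₁ C₂).symm
  have hUpos : 1 ≤ spanCount E (C₁ ∪ C₂) := by
    refine le_trans h1pos (Multiset.card_le_card ?_)
    apply Multiset.monotone_filter_right
    intro e he; exact he.trans Finset.subset_union_left
  have hUle := hsp (C₁ ∪ C₂) hUpos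
  have hdisj : ∀ e ∈ E, e ⊆ C₁ → ¬ e ⊆ C₂ := by
    intro e heE he1 he2
    have hIpos : 1 ≤ spanCount E (C₁ ∩ C₂) := by
      rw [spanCount, Nat.one_le_iff_ne_zero, ← Nat.pos_iff_ne_zero,
        Multiset.card_pos_iff_exists_mem]
      exact ⟨e, Multiset.mem_filter.2 ⟨heE, Finset.subset_inter he1 he2⟩⟩
    have hIle := hsp (C₁ ∩ C₂) hIpos
    -- forces union to be a block
    have hUblock : IsBlock k l E (C₁ ∪ C₂) := by
      refine ⟨hUpos, ?_⟩
      have : k * C₁.card + k * C₂.card = k * (C₁ ∪ C₂).card + k * (C₁ ∩ C₂).card := by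
        rw [← Nat.mul_add, ← Nat.mul_add, hcards]
      omega
    have e1 := h1max _ hUblock Finset.subset_union_left
    have e2 := h2max _ hUblock Finset.subset_union_right
    exact hne (e1 ▸ e2)
  refine ⟨hdisj, ?_⟩
  have hI0 : spanCount E (C₁ ∩ C₂) = 0 := by
    rw [spanCount, Multiset.card_eq_zero, Multiset.filter_eq_nil]
    intro e he hsubI
    exact hdisj e he (hsubI.trans Finset.inter_subset_left)
      (hsubI.trans Finset.inter_subset_right)
  by_contra hge
  push_neg at hge
  have : s * k ≤ k * (C₁ ∩ C₂).card := by
    calc s * k ≤ (C₁ ∩ C₂).card * k := Nat.mul_le_mul_right k hge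
    _ = k * (C₁ ∩ C₂).card := Nat.mul_comm _ _
  have hkcards : k * C₁.card + k * C₂.card = k * (C₁ ∪ C₂).card + k * (C₁ ∩ C₂).card := by
    rw [← Nat.mul_add, ← Nat.mul_add, hcards]
  omega
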